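/- arXiv:1501.03774 — 2 statements merged into one kernel-verified Lean document; each statement's English description precedes it below -/
import Mathlib

section
/- Let k ≥ 2 be an integer and let q = G_{u,v} and t = H_{v,w} be two g-edges sharing the single terminal v and otherwise vertex-disjoint, with open k-capacities CP_k(q) = A and CP_k(t) = B. Then their union (the serial join of q and t) is a g-edge with terminals u and w whose open k-capacity equals A ∩ B. Consequently, the set GI_k of all k-capacities of g-edges is closed under the operations A + B = {a+b : a∈A, b∈B} and A ∩ B. -/
open Finset


open Finset

/-- A finite multigraph given with a reference orientation: each edge `e` goes
from `src e` to `tgt e`.  An orientation of the graph is a sign function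
`σ : E → ℤˣ` telling, for each edge, whether it keeps (`1`) or reverses (`-1`)
its reference direction. -/
structure Multigraph where
  V : Type
  E : Type
  [fintV : Fintype V]
  [fintE : Fintype E]
  [decV : DecidableEq V]
  [decE : DecidableEq E]
  src : E → V
  tgt : E → V

attribute [instance] Multigraph.fintV Multigraph.fintE Multigraph.decV Multigraph.decE

/-- `f` is a flow with respect to the reference orientation: at every vertex the
sum over outgoing edges equals the sum over incoming edges. -/
def Multigraph.IsFlow (G : Multigraph) {M : Type*} [AddCommMonoid M] (f : G.E → M) : Prop :=
  ∀ v : G.V,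
    ∑ e ∈ Finset.univ.filter (fun e => G.src e = v), f e =
    ∑ e ∈ Finset.univ.filter (fun e => G.tgt e = v), f e

/-- `f` is a flow on the orientation `σ` of `G` (values of `f` are read in the
direction given by `σ`). -/
def Multigraph.IsFlowOn (G : Multigraph) {M : Type*} [AddCommGroup M]
    (σ : G.E → ℤˣ) (f : G.E → M) : Prop :=
  G.IsFlow (fun e => ((σ e : ℤ) • f e))

/-- The open interval `(a,b)` of `ℝ/rℤ`: the points traversed strictly clockwise
from `a` to `b`, with the convention `(a,a) = ℝ/rℤ \ {a}`. -/
noncomputable def openArc (r a b : ℝ) : Set (AddCircle r) :=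
  (fun t : ℝ => (t : AddCircle r)) '' Set.Ioo a (a + (r - Int.fract ((a - b) / r) * r))

/-- The closed interval `[a,b]` of `ℝ/rℤ`: the points traversed clockwise from
`a` to `b`, endpoints included, with the convention `[a,a] = {a}`. -/
noncomputable def closedArc (r a b : ℝ) : Set (AddCircle r) :=
  (fun t : ℝ => (t : AddCircle r)) '' Set.Icc a (a + Int.fract ((b - a) / r) * r)

/-- `G` has a circular nowhere-zero `r`-flow: an orientation together with a
real-valued flow all of whose values lie in `[1, r-1]`. -/
def Multigraph.HasCNZF (G : Multigraph) (r : ℝ) : Prop :=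
  ∃ (σ : G.E → ℤˣ) (f : G.E → ℝ), G.IsFlowOn σ f ∧ ∀ e, f e ∈ Set.Icc (1:ℝ) (r - 1)

/-- The circular flow number of `G`, as an extended real (`⊤` if `G` admits no
circular nowhere-zero `r`-flow for any `r`, e.g. if `G` has a bridge). -/
noncomputable def circFlowNumber (G : Multigraph) : EReal :=
  sInf {x : EReal | ∃ r : ℝ, x = (r : EReal) ∧ G.HasCNZF r}

/-- The graph `G ∪ e₀` obtained from `G` by adding one extra edge `e₀ = none`
joining `u` to `v`. -/
def Multigraph.addEdge (G : Multigraph) (u v : G.V) : Multigraph where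
  V := G.V
  E := Option G.E
  src := fun e => e.elim u G.src
  tgt := fun e => e.elim v G.tgt

/-- The capacity of the capacitated g-edge `(G, cap)` with terminals `u,v`:
all values `f e₀` of modular flows `f` on `G ∪ e₀` (over all orientations) whose
value on each edge `e` of `G` lies in the prescribed set `cap e`. -/
def CPcap (r : ℝ) (G : Multigraph) (cap : G.E → Set (AddCircle r)) (u v : G.V) :
    Set (AddCircle r) :=
  {t | ∃ (σ : Option G.E → ℤˣ) (f : Option G.E → AddCircle r),
        (G.addEdge u v).IsFlowOn σ f ∧ (∀ e : G.E, f (some e) ∈ cap e) ∧ f none = t}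

/-- The open `r`-capacity `CP_r(G_{u,v})` of the g-edge `G_{u,v}`. -/
noncomputable def CP (r : ℝ) (G : Multigraph) (u v : G.V) : Set (AddCircle r) :=
  CPcap r G (fun _ => openArc r 1 (r - 1)) u v

/-- A capacitated graph `(G, cap)` admits a flow respecting all capacities
(for `cap e = (1,4) ⊆ ℝ/5ℤ` everywhere this is a sub-5-MCNZF). -/
def HasCapFlow (r : ℝ) (G : Multigraph) (cap : G.E → Set (AddCircle r)) : Prop :=
  ∃ (σ : G.E → ℤˣ) (f : G.E → AddCircle r), G.IsFlowOn σ f ∧ ∀ e, f e ∈ cap e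

/-- Deletion of the edge `e₀`. -/
def Multigraph.deleteEdge (G : Multigraph) (e₀ : G.E) : Multigraph where
  V := G.V
  E := {e : G.E // e ≠ e₀}
  src := fun e => G.src e.1
  tgt := fun e => G.tgt e.1

/-- Degree of a vertex (loops count twice). -/
def Multigraph.degree (G : Multigraph) (v : G.V) : ℕ :=
  (Finset.univ.filter (fun e => G.src e = v)).card +
  (Finset.univ.filter (fun e => G.tgt e = v)).card

/-- The tail of edge `e` in the orientation `σ`. -/
def Multigraph.osrc (G : Multigraph) (σ : G.E → ℤˣ) (e : G.E) : G.V :=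
  if σ e = 1 then G.src e else G.tgt e

/-- The head of edge `e` in the orientation `σ`. -/
def Multigraph.otgt (G : Multigraph) (σ : G.E → ℤˣ) (e : G.E) : G.V :=
  if σ e = 1 then G.tgt e else G.src e

/-- Vertex embedding for the parallel join: `H`'s terminals `u', v'` are glued
onto `G`'s terminals `u, v`; other vertices of `H` are kept. -/
def pjEmbed (G H : Multigraph) (u v : G.V) (u' v' : H.V) (x : H.V) :
    G.V ⊕ {x : H.V // x ≠ u' ∧ x ≠ v'} :=
  if h1 : x = u' then Sum.inl u
  else if h2 : x = v' then Sum.inl v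
  else Sum.inr ⟨x, h1, h2⟩

/-- Parallel join of the g-edges `G_{u,v}` and `H_{u',v'}`: their disjoint union
with `u'` identified with `u` and `v'` identified with `v`. -/
def parallelJoin (G H : Multigraph) (u v : G.V) (u' v' : H.V) : Multigraph where
  V := G.V ⊕ {x : H.V // x ≠ u' ∧ x ≠ v'}
  E := G.E ⊕ H.E
  src := Sum.elim (fun e => Sum.inl (G.src e)) (fun e => pjEmbed G H u v u' v' (H.src e))
  tgt := Sum.elim (fun e => Sum.inl (G.tgt e)) (fun e => pjEmbed G H u v u' v' (H.tgt e))

/-- Vertex embedding for the serial join: `H`'s terminal `v'` is glued onto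
`G`'s vertex `v`; other vertices of `H` are kept. -/
def sjEmbed (G H : Multigraph) (v : G.V) (v' : H.V) (x : H.V) :
    G.V ⊕ {x : H.V // x ≠ v'} :=
  if h : x = v' then Sum.inl v else Sum.inr ⟨x, h⟩

/-- Serial join of the g-edges `G_{u,v}` and `H_{v',w}`: their disjoint union
with `v'` identified with `v`. -/
def serialJoin (G H : Multigraph) (v : G.V) (v' : H.V) : Multigraph where
  V := G.V ⊕ {x : H.V // x ≠ v'}
  E := G.E ⊕ H.E
  src := Sum.elim (fun e => Sum.inl (G.src e)) (fun e => sjEmbed G H v v' (H.src e))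
  tgt := Sum.elim (fun e => Sum.inl (G.tgt e)) (fun e => sjEmbed G H v v' (H.tgt e))

/-- `A` is a graphic subset of `ℝ/kℤ`: it is the open `k`-capacity of some
g-edge. -/
def Graphic (k : ℝ) (A : Set (AddCircle k)) : Prop :=
  ∃ (G : Multigraph) (u v : G.V), u ≠ v ∧ CP k G u v = A

/-- Net outflow of `f` at vertex `x`. -/
def mnet (M : Multigraph) {A : Type*} [AddCommGroup A] (f : M.E → A) (x : M.V) : A :=
  (∑ e, if M.src e = x then f e else 0) - (∑ e, if M.tgt e = x then f e else 0)

lemma sum_addEdge_E (M : Multigraph) (a b : M.V) {A : Type*} [AddCommMonoid A]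
    (g : (M.addEdge a b).E → A) : ∑ e, g e = g none + ∑ e : M.E, g (some e) :=
  Fintype.sum_option g

lemma sum_serialJoin_E (G H : Multigraph) (v : G.V) (v' : H.V) {A : Type*} [AddCommMonoid A]
    (g : (serialJoin G H v v').E → A) :
    ∑ e, g e = ∑ e : G.E, g (Sum.inl e) + ∑ e : H.E, g (Sum.inr e) :=
  Fintype.sum_sum_type g

lemma sum_parallelJoin_E (G H : Multigraph) (u v : G.V) (u' v' : H.V) {A : Type*}
    [AddCommMonoid A] (g : (parallelJoin G H u v u' v').E → A) :
    ∑ e, g e = ∑ e : G.E, g (Sum.inl e) + ∑ e : H.E, g (Sum.inr e) :=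
  Fintype.sum_sum_type g

lemma isFlow_iff_mnet (M : Multigraph) {A : Type*} [AddCommGroup A] (f : M.E → A) :
    M.IsFlow f ↔ ∀ x, mnet M f x = 0 := by
  unfold Multigraph.IsFlow mnet
  simp [Finset.sum_filter, sub_eq_zero]

lemma sum_mnet (M : Multigraph) {A : Type*} [AddCommGroup A] (f : M.E → A) :
    ∑ x, mnet M f x = 0 := by
  unfold mnet
  have h1 : ∀ (g : M.E → M.V), ∑ x, ∑ e, (if g e = x then f e else 0) = ∑ e, f e := by
    intro g
    rw [Finset.sum_comm]
    simp
  rw [Finset.sum_sub_distrib, h1, h1, sub_self]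

lemma mnet_last (M : Multigraph) {A : Type*} [AddCommGroup A] (f : M.E → A) (v₀ : M.V)
    (h : ∀ x, x ≠ v₀ → mnet M f x = 0) : mnet M f v₀ = 0 := by
  have hs := sum_mnet M f
  rwa [Finset.sum_eq_single v₀ (fun x _ hx => h x hx) (by simp)] at hs

lemma mnet_addEdge (M : Multigraph) {A : Type*} [AddCommGroup A] (a b : M.V)
    (f0 : M.E → A) (t : A) (x : M.V) :
    mnet (M.addEdge a b) (fun e => e.elim t f0) x
      = ((if a = x then t else 0) - (if b = x then t else 0)) + mnet M f0 x := by
  simp only [mnet, sum_addEdge_E]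
  simp only [mnet, Multigraph.addEdge, Fintype.sum_option, Option.elim]
  abel!
lemma sjEmbed_eq_inl (G H : Multigraph) (v : G.V) (v' : H.V) (y : H.V) (x : G.V) :
    sjEmbed G H v v' y = Sum.inl x ↔ (y = v' ∧ v = x) := by
  unfold sjEmbed
  split <;> simp_all

lemma sjEmbed_eq_inr (G H : Multigraph) (v : G.V) (v' : H.V) (y : H.V)
    (z : {x : H.V // x ≠ v'}) :
    sjEmbed G H v v' y = Sum.inr z ↔ y = z.1 := by
  unfold sjEmbed
  split
  · rename_i h
    subst h
    simp only [reduceCtorEq, false_iff]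
    exact fun hy => z.2 hy.symm
  · simp [Subtype.ext_iff]

lemma mnet_serial_inl {A : Type*} [AddCommGroup A] (G H : Multigraph) (u v : G.V)
    (v' w : H.V) (hw : w ≠ v') (fG : G.E → A) (fH : H.E → A) (t : A) (x : G.V) :
    mnet ((serialJoin G H v v').addEdge (Sum.inl u) (Sum.inr ⟨w, hw⟩))
      (fun e => e.elim t (Sum.elim fG fH)) (Sum.inl x)
    = (if u = x then t else 0) + mnet G fG x
      + (if v = x then mnet H fH v' else 0) := by
  simp only [mnet, sum_addEdge_E (serialJoin G H v v') (Sum.inl u) (Sum.inr ⟨w, hw⟩),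
    sum_serialJoin_E G H v v']
  by_cases hvx : v = x <;>
    simp only [mnet, Multigraph.addEdge, serialJoin, Fintype.sum_option, Option.elim,
      Fintype.sum_sum_type, Sum.elim_inl, Sum.elim_inr, Sum.inl.injEq, reduceCtorEq,
      if_false, sjEmbed_eq_inl, hvx, and_true, and_false, if_true,
      Finset.sum_const_zero] <;> abel

lemma mnet_serial_inr {A : Type*} [AddCommGroup A] (G H : Multigraph) (u v : G.V)
    (v' w : H.V) (hw : w ≠ v') (fG : G.E → A) (fH : H.E → A) (t : A)
    (y : H.V) (hy : y ≠ v') :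
    mnet ((serialJoin G H v v').addEdge (Sum.inl u) (Sum.inr ⟨w, hw⟩))
      (fun e => e.elim t (Sum.elim fG fH)) (Sum.inr ⟨y, hy⟩)
    = mnet H fH y - (if w = y then t else 0) := by
  simp only [mnet, sum_addEdge_E (serialJoin G H v v') (Sum.inl u) (Sum.inr ⟨w, hw⟩),
    sum_serialJoin_E G H v v']
  simp only [mnet, Multigraph.addEdge, serialJoin, Fintype.sum_option, Option.elim,
    Fintype.sum_sum_type, Sum.elim_inl, Sum.elim_inr, Sum.inr.injEq, reduceCtorEq,
    if_false, sjEmbed_eq_inr, Subtype.mk.injEq, Finset.sum_const_zero]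
  abel
lemma serial_isFlow_iff {A : Type*} [AddCommGroup A] (G H : Multigraph) (u v : G.V)
    (v' w : H.V) (huv : u ≠ v) (hw : w ≠ v') (fG : G.E → A) (fH : H.E → A) (t : A) :
    ((serialJoin G H v v').addEdge (Sum.inl u) (Sum.inr ⟨w, hw⟩)).IsFlow
        (fun e => e.elim t (Sum.elim fG fH))
    ↔ (G.addEdge u v).IsFlow (fun e => e.elim t fG)
      ∧ (H.addEdge v' w).IsFlow (fun e => e.elim t fH) := by
  rw [isFlow_iff_mnet, isFlow_iff_mnet, isFlow_iff_mnet]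
  constructor
  · intro h
    have hH : ∀ y, mnet (H.addEdge v' w) (fun e => e.elim t fH) y = 0 := by
      have hHne : ∀ y, y ≠ v' → mnet (H.addEdge v' w) (fun e => e.elim t fH) y = 0 := by
        intro y hy
        have h2 := h (Sum.inr ⟨y, hy⟩)
        rw [mnet_serial_inr G H u v v' w hw fG fH t y hy] at h2
        rw [mnet_addEdge]
        have : mnet H fH y = if w = y then t else 0 := by
          have := sub_eq_zero.mp h2; linear_combination (norm := abel) this
        rw [this, if_neg (fun hvy => hy hvy.symm)]
        abel
      intro y
      by_cases hy : y = v'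
      · rw [hy]; exact mnet_last (H.addEdge v' w) _ v' hHne
      · exact hHne y hy
    refine ⟨?_, hH⟩
    have hGne : ∀ x, x ≠ v → mnet (G.addEdge u v) (fun e => e.elim t fG) x = 0 := by
      intro x hx
      have h2 := h (Sum.inl x)
      rw [mnet_serial_inl G H u v v' w hw fG fH t x] at h2
      rw [if_neg (show ¬ v = x from fun hvx => hx hvx.symm), add_zero] at h2
      rw [mnet_addEdge, if_neg (show ¬ v = x from fun hvx => hx hvx.symm)]
      linear_combination (norm := abel) h2
    intro x
    by_cases hx : x = v
    · rw [hx]; exact mnet_last (G.addEdge u v) _ v hGne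
    · exact hGne x hx
  · rintro ⟨hG, hH⟩ z
    have hHv' : mnet H fH v' = -t := by
      have h2 := hH v'
      rw [mnet_addEdge, if_pos rfl, if_neg hw] at h2
      linear_combination (norm := abel) h2
    match z with
    | Sum.inl x =>
      rw [mnet_serial_inl G H u v v' w hw fG fH t x]
      have h2 := hG x
      rw [mnet_addEdge] at h2
      by_cases hvx : v = x
      · rw [if_pos hvx] at h2 ⊢
        rw [hHv']
        linear_combination (norm := abel) h2
      · rw [if_neg hvx] at h2 ⊢
        linear_combination (norm := abel) h2
    | Sum.inr ⟨y, hy⟩ =>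
      rw [mnet_serial_inr G H u v v' w hw fG fH t y hy]
      have h2 := hH y
      rw [mnet_addEdge, if_neg (fun h => hy h.symm)] at h2
      linear_combination (norm := abel) h2
lemma mem_CPcap_iff (r : ℝ) (G : Multigraph) (cap : G.E → Set (AddCircle r))
    (hcap : ∀ e x, x ∈ cap e → -x ∈ cap e) (u v : G.V) (t : AddCircle r) :
    t ∈ CPcap r G cap u v ↔
      ∃ f : Option G.E → AddCircle r, (G.addEdge u v).IsFlow f ∧
        (∀ e, f (some e) ∈ cap e) ∧ f none = t := by
  constructor
  · rintro ⟨σ, f, hflow, hmem, hnone⟩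
    have hg : (G.addEdge u v).IsFlow (fun e => ((σ e : ℤ) • f e)) := hflow
    have hmemg : ∀ e, ((σ (some e) : ℤ) • f (some e)) ∈ cap e := by
      intro e
      rcases Int.units_eq_one_or (σ (some e)) with h | h
      · rw [h]; simpa using hmem e
      · rw [h]; simpa using hcap _ _ (hmem e)
    rcases Int.units_eq_one_or (σ none) with h | h
    · exact ⟨fun e => ((σ e : ℤ) • f e), hg, hmemg, by
        show ((σ none : ℤ) • f none) = t
        rw [h]; simpa using hnone⟩
    · refine ⟨fun e => -((σ e : ℤ) • f e), ?_, fun e => hcap _ _ (hmemg e), ?_⟩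
      swap
      · show -((σ none : ℤ) • f none) = t
        rw [h]; simpa using hnone
      intro x
      have h2 := hg x
      simp only [Finset.sum_neg_distrib]
      rw [h2]
  · rintro ⟨f, hf, hmem, hnone⟩
    refine ⟨fun _ => 1, f, ?_, hmem, hnone⟩
    unfold Multigraph.IsFlowOn
    simpa using hf

lemma neg_mem_openArc (k : ℝ) (hk : k ≠ 0) {x : AddCircle k}
    (hx : x ∈ openArc k 1 (k - 1)) : -x ∈ openArc k 1 (k - 1) := by
  obtain ⟨s, hs, rfl⟩ := hx
  set c : ℝ := k - Int.fract ((1 - (k - 1)) / k) * k with hc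
  refine ⟨1 + c + 1 - s, ?_, ?_⟩
  · obtain ⟨h1, h2⟩ := hs
    exact ⟨by linarith, by linarith⟩
  · have hck : (2 + c) = (2 + ⌊(1 - (k - 1)) / k⌋ : ℤ) * k := by
      rw [hc, Int.fract]
      push_cast
      field_simp
      ring
    have hz : ((2 + c : ℝ) : AddCircle k) = 0 := by
      rw [hck]
      rw [AddCircle.coe_eq_zero_iff]
      exact ⟨2 + ⌊(1 - (k - 1)) / k⌋, by simp [zsmul_eq_mul]⟩
    show ((1 + c + 1 - s : ℝ) : AddCircle k) = -((s : ℝ) : AddCircle k)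
    have h12 : (1 + c + 1 - s : ℝ) = (2 + c) - s := by ring
    rw [h12, QuotientAddGroup.mk_sub, hz, zero_sub]
lemma serial_CP (k : ℝ) (hk : k ≠ 0) (G H : Multigraph) (u v : G.V) (v' w : H.V)
    (huv : u ≠ v) (hw : w ≠ v') :
    CP k (serialJoin G H v v') (Sum.inl u) (Sum.inr ⟨w, hw⟩)
      = CP k G u v ∩ CP k H v' w := by
  have hcap : ∀ x : AddCircle k, x ∈ openArc k 1 (k - 1) → -x ∈ openArc k 1 (k - 1) :=
    fun x => neg_mem_openArc k hk
  ext t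
  unfold CP
  rw [Set.mem_inter_iff,
    mem_CPcap_iff k _ _ (fun _ => hcap) _ _,
    mem_CPcap_iff k _ _ (fun _ => hcap) _ _,
    mem_CPcap_iff k (serialJoin G H v v') _ (fun _ => hcap) (Sum.inl u) (Sum.inr ⟨w, hw⟩)]
  constructor
  · rintro ⟨F, hF, hmem, hnone⟩
    have hFeq : F = fun e => e.elim t (Sum.elim (fun e => F (some (Sum.inl e)))
        (fun e => F (some (Sum.inr e)))) := by
      funext e
      match e with
      | none => exact hnone
      | some (Sum.inl e) => rfl
      | some (Sum.inr e) => rfl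
    rw [hFeq] at hF
    have hF2 := (serial_isFlow_iff G H u v v' w huv hw
      (fun e => F (some (Sum.inl e))) (fun e => F (some (Sum.inr e))) t).mp hF
    exact ⟨⟨_, hF2.1, fun e => hmem (Sum.inl e), rfl⟩,
           ⟨_, hF2.2, fun e => hmem (Sum.inr e), rfl⟩⟩
  · rintro ⟨⟨f, hf, hfmem, hfnone⟩, ⟨g, hg, hgmem, hgnone⟩⟩
    have hfeq : f = fun e => e.elim t (fun e => f (some e)) := by
      funext e; match e with
      | none => exact hfnone
      | some e => rfl
    have hgeq : g = fun e => e.elim t (fun e => g (some e)) := by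
      funext e; match e with
      | none => exact hgnone
      | some e => rfl
    rw [hfeq] at hf; rw [hgeq] at hg
    refine ⟨fun e => e.elim t (Sum.elim (fun e => f (some e)) (fun e => g (some e))),
      ?_, ?_, rfl⟩
    · exact (serial_isFlow_iff G H u v v' w huv hw
        (fun e => f (some e)) (fun e => g (some e)) t).mpr ⟨hf, hg⟩
    · rintro (e | e)
      · exact hfmem e
      · exact hgmem e
lemma pjEmbed_eq_inl (G H : Multigraph) (u v : G.V) (u' v' : H.V) (hne : u' ≠ v')
    (y : H.V) (x : G.V) :
    pjEmbed G H u v u' v' y = Sum.inl x ↔ ((y = u' ∧ u = x) ∨ (y = v' ∧ v = x)) := by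
  unfold pjEmbed
  split
  · rename_i h; subst h; simp [hne]
  · split <;> simp_all

lemma pjEmbed_eq_inr (G H : Multigraph) (u v : G.V) (u' v' : H.V) (y : H.V)
    (z : {x : H.V // x ≠ u' ∧ x ≠ v'}) :
    pjEmbed G H u v u' v' y = Sum.inr z ↔ y = z.1 := by
  unfold pjEmbed
  split
  · rename_i h
    subst h
    simp only [reduceCtorEq, false_iff]
    exact fun hy => z.2.1 hy.symm
  · split
    · rename_i h
      subst h
      simp only [reduceCtorEq, false_iff]
      exact fun hy => z.2.2 hy.symm
    · simp [Subtype.ext_iff]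

lemma mnet_parallel_inl {A : Type*} [AddCommGroup A] (G H : Multigraph) (u v : G.V)
    (u' v' : H.V) (huv : u ≠ v) (hne : u' ≠ v') (fG : G.E → A) (fH : H.E → A) (t : A)
    (x : G.V) :
    mnet ((parallelJoin G H u v u' v').addEdge (Sum.inl u) (Sum.inl v))
      (fun e => e.elim t (Sum.elim fG fH)) (Sum.inl x)
    = ((if u = x then t else 0) - (if v = x then t else 0)) + mnet G fG x
      + (if u = x then mnet H fH u' else 0) + (if v = x then mnet H fH v' else 0) := by
  simp only [mnet, sum_addEdge_E (parallelJoin G H u v u' v') (Sum.inl u) (Sum.inl v),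
    sum_parallelJoin_E G H u v u' v']
  have hpj := pjEmbed_eq_inl G H u v u' v' hne
  by_cases hux : u = x <;> by_cases hvx : v = x
  · exact absurd (hux.trans hvx.symm) huv
  all_goals
    simp only [mnet, Multigraph.addEdge, parallelJoin, Fintype.sum_option, Option.elim,
      Fintype.sum_sum_type, Sum.elim_inl, Sum.elim_inr, Sum.inl.injEq, reduceCtorEq,
      if_false, hpj, Finset.sum_const_zero]
    simp only [hux, hvx, and_true, and_false, or_false, false_or, if_true, if_false,
      eq_self_iff_true, Finset.sum_const_zero]
    abel

lemma mnet_parallel_inr {A : Type*} [AddCommGroup A] (G H : Multigraph) (u v : G.V)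
    (u' v' : H.V) (fG : G.E → A) (fH : H.E → A) (t : A)
    (y : H.V) (hy1 : y ≠ u') (hy2 : y ≠ v') :
    mnet ((parallelJoin G H u v u' v').addEdge (Sum.inl u) (Sum.inl v))
      (fun e => e.elim t (Sum.elim fG fH)) (Sum.inr ⟨y, hy1, hy2⟩)
    = mnet H fH y := by
  simp only [mnet, sum_addEdge_E (parallelJoin G H u v u' v') (Sum.inl u) (Sum.inl v),
    sum_parallelJoin_E G H u v u' v']
  simp only [mnet, Multigraph.addEdge, parallelJoin, Fintype.sum_option, Option.elim,
    Fintype.sum_sum_type, Sum.elim_inl, Sum.elim_inr, reduceCtorEq, if_false,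
    pjEmbed_eq_inr, Finset.sum_const_zero]
  abel
lemma parallel_isFlow_mpr {A : Type*} [AddCommGroup A] (G H : Multigraph) (u v : G.V)
    (u' v' : H.V) (huv : u ≠ v) (hne : u' ≠ v') (fG : G.E → A) (fH : H.E → A) (a b : A)
    (hG : (G.addEdge u v).IsFlow (fun e => e.elim a fG))
    (hH : (H.addEdge u' v').IsFlow (fun e => e.elim b fH)) :
    ((parallelJoin G H u v u' v').addEdge (Sum.inl u) (Sum.inl v)).IsFlow
      (fun e => e.elim (a + b) (Sum.elim fG fH)) := by
  rw [isFlow_iff_mnet] at hG hH ⊢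
  have hGx : ∀ x : G.V, mnet G fG x = (if v = x then a else 0) - (if u = x then a else 0) := by
    intro x
    have h2 := hG x
    rw [mnet_addEdge] at h2
    linear_combination (norm := abel) h2
  have hHu' : mnet H fH u' = -b := by
    have h2 := hH u'
    rw [mnet_addEdge, if_pos rfl, if_neg (fun h => hne h.symm)] at h2
    linear_combination (norm := abel) h2
  have hHv' : mnet H fH v' = b := by
    have h2 := hH v'
    rw [mnet_addEdge, if_neg hne, if_pos rfl] at h2
    linear_combination (norm := abel) h2
  have hHy : ∀ y : H.V, y ≠ u' → y ≠ v' → mnet H fH y = 0 := by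
    intro y hy1 hy2
    have h2 := hH y
    rw [mnet_addEdge, if_neg (fun h => hy1 h.symm), if_neg (fun h => hy2 h.symm)] at h2
    linear_combination (norm := abel) h2
  rintro (x | ⟨y, hy1, hy2⟩)
  · rw [mnet_parallel_inl G H u v u' v' huv hne fG fH (a + b) x, hGx x, hHu', hHv']
    by_cases hux : u = x <;> by_cases hvx : v = x
    · exact absurd (hux.trans hvx.symm) huv
    all_goals simp only [hux, hvx, eq_self_iff_true, if_true, if_false]
    all_goals abel
  · rw [mnet_parallel_inr G H u v u' v' fG fH (a + b) y hy1 hy2]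
    exact hHy y hy1 hy2

lemma parallel_isFlow_mp {A : Type*} [AddCommGroup A] (G H : Multigraph) (u v : G.V)
    (u' v' : H.V) (huv : u ≠ v) (hne : u' ≠ v') (fG : G.E → A) (fH : H.E → A) (t : A)
    (hF : ((parallelJoin G H u v u' v').addEdge (Sum.inl u) (Sum.inl v)).IsFlow
      (fun e => e.elim t (Sum.elim fG fH))) :
    ∃ a b : A, t = a + b ∧ (G.addEdge u v).IsFlow (fun e => e.elim a fG)
      ∧ (H.addEdge u' v').IsFlow (fun e => e.elim b fH) := by
  rw [isFlow_iff_mnet] at hF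
  refine ⟨-mnet G fG u, -mnet H fH u', ?_, ?_, ?_⟩
  · have h2 := hF (Sum.inl u)
    rw [mnet_parallel_inl G H u v u' v' huv hne fG fH t u, if_pos rfl, if_pos rfl,
      if_neg (fun h => huv h.symm), if_neg (fun h => huv h.symm)] at h2
    linear_combination (norm := abel) h2
  · rw [isFlow_iff_mnet]
    have hne' : ∀ x : G.V, x ≠ v → mnet (G.addEdge u v) (fun e => e.elim (-mnet G fG u) fG) x = 0 := by
      intro x hx
      have h2 := hF (Sum.inl x)
      rw [mnet_parallel_inl G H u v u' v' huv hne fG fH t x,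
        if_neg (show ¬ v = x from fun h => hx h.symm),
        if_neg (show ¬ v = x from fun h => hx h.symm)] at h2
      rw [mnet_addEdge, if_neg (show ¬ v = x from fun h => hx h.symm)]
      by_cases hux : u = x
      · subst hux
        rw [if_pos rfl] at h2 ⊢
        abel
      · rw [if_neg hux, if_neg hux] at h2
        rw [if_neg hux]
        linear_combination (norm := abel) h2
    intro x
    by_cases hx : x = v
    · rw [hx]; exact mnet_last (G.addEdge u v) _ v hne'
    · exact hne' x hx
  · rw [isFlow_iff_mnet]
    have hne' : ∀ y : H.V, y ≠ v' → mnet (H.addEdge u' v') (fun e => e.elim (-mnet H fH u') fH) y = 0 := by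
      intro y hy
      rw [mnet_addEdge, if_neg (show ¬ v' = y from fun h => hy h.symm)]
      by_cases hy1 : y = u'
      · subst hy1
        rw [if_pos rfl]
        abel
      · have h2 := hF (Sum.inr ⟨y, hy1, hy⟩)
        rw [mnet_parallel_inr G H u v u' v' fG fH t y hy1 hy] at h2
        rw [if_neg (show ¬ u' = y from fun h => hy1 h.symm)]
        linear_combination (norm := abel) h2
    intro y
    by_cases hy : y = v'
    · rw [hy]; exact mnet_last (H.addEdge u' v') _ v' hne'
    · exact hne' y hy
open Pointwise in
lemma parallel_CP (k : ℝ) (hk : k ≠ 0) (G H : Multigraph) (u v : G.V) (u' v' : H.V)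
    (huv : u ≠ v) (hne : u' ≠ v') :
    CP k (parallelJoin G H u v u' v') (Sum.inl u) (Sum.inl v)
      = CP k G u v + CP k H u' v' := by
  have hcap : ∀ x : AddCircle k, x ∈ openArc k 1 (k - 1) → -x ∈ openArc k 1 (k - 1) :=
    fun x => neg_mem_openArc k hk
  ext t
  unfold CP
  rw [mem_CPcap_iff k (parallelJoin G H u v u' v') _ (fun _ => hcap) (Sum.inl u) (Sum.inl v)]
  constructor
  · rintro ⟨F, hF, hmem, hnone⟩
    have hFeq : F = fun e => e.elim t (Sum.elim (fun e => F (some (Sum.inl e)))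
        (fun e => F (some (Sum.inr e)))) := by
      funext e
      match e with
      | none => exact hnone
      | some (Sum.inl e) => rfl
      | some (Sum.inr e) => rfl
    rw [hFeq] at hF
    obtain ⟨a, b, hab, hGa, hHb⟩ := parallel_isFlow_mp G H u v u' v' huv hne
      (fun e => F (some (Sum.inl e))) (fun e => F (some (Sum.inr e))) t hF
    rw [hab]
    refine Set.add_mem_add ?_ ?_
    · exact (mem_CPcap_iff k G _ (fun _ => hcap) u v a).mpr
        ⟨_, hGa, fun e => hmem (Sum.inl e), rfl⟩
    · exact (mem_CPcap_iff k H _ (fun _ => hcap) u' v' b).mpr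
        ⟨_, hHb, fun e => hmem (Sum.inr e), rfl⟩
  · rintro ⟨a, ha, b, hb, rfl⟩
    rw [mem_CPcap_iff k _ _ (fun _ => hcap) _ _] at ha
    rw [mem_CPcap_iff k _ _ (fun _ => hcap) _ _] at hb
    obtain ⟨f, hf, hfmem, hfnone⟩ := ha
    obtain ⟨g, hg, hgmem, hgnone⟩ := hb
    have hfeq : f = fun e => e.elim a (fun e => f (some e)) := by
      funext e; match e with
      | none => exact hfnone
      | some e => rfl
    have hgeq : g = fun e => e.elim b (fun e => g (some e)) := by
      funext e; match e with
      | none => exact hgnone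
      | some e => rfl
    rw [hfeq] at hf; rw [hgeq] at hg
    refine ⟨fun e => e.elim (a + b) (Sum.elim (fun e => f (some e)) (fun e => g (some e))),
      parallel_isFlow_mpr G H u v u' v' huv hne _ _ a b hf hg, ?_, rfl⟩
    rintro (e | e)
    · exact hfmem e
    · exact hgmem e
open Pointwise in
/-- The open `k`-capacity of the serial join of two g-edges
sharing a single terminal (and otherwise disjoint) is the intersection of
their open `k`-capacities; consequently the set `GI_k` of graphic subsets of
`ℝ/kℤ` is closed under pointwise addition and under intersection. -/
theorem serialJoin_capacity (k : ℕ) (hk : 2 ≤ k) :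
    (∀ (G H : Multigraph) (u v : G.V) (v' w : H.V), u ≠ v →
      ∀ hw : w ≠ v',
      CP (k : ℝ) (serialJoin G H v v') (Sum.inl u) (Sum.inr ⟨w, hw⟩)
        = CP (k : ℝ) G u v ∩ CP (k : ℝ) H v' w) ∧
    (∀ A B : Set (AddCircle (k : ℝ)), Graphic (k : ℝ) A → Graphic (k : ℝ) B →
      Graphic (k : ℝ) (A + B) ∧ Graphic (k : ℝ) (A ∩ B)) := by
  have hk0 : (k : ℝ) ≠ 0 := Nat.cast_ne_zero.mpr (by omega)
  constructor
  · intro G H u v v' w huv hw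
    exact serial_CP _ hk0 G H u v v' w huv hw
  · rintro A B ⟨G, u, v, huv, hA⟩ ⟨H, u', v', hne, hB⟩
    constructor
    · refine ⟨parallelJoin G H u v u' v', Sum.inl u, Sum.inl v,
        fun h => huv (Sum.inl.inj h), ?_⟩
      rw [parallel_CP _ hk0 G H u v u' v' huv hne, hA, hB]
    · refine ⟨serialJoin G H v u', Sum.inl u, Sum.inr ⟨v', hne.symm⟩, Sum.inl_ne_inr, ?_⟩
      rw [serial_CP _ hk0 G H u v u' v' huv hne.symm, hA, hB]
end

section
/- Let G be a capacitated graph containing an odd cycle C all of whose vertices have degree 3 in G, such that all edges of C carry the same capacity A, where A is a symmetric union of exactly two open integer unit intervals of ℝ/5ℤ (i.e., Me(A) = 2), and the third edge incident with each vertex of C has capacity contained in (1,4). Then the deletion of an edge uv of C yields a capacitated g-edge q = G_{u,v} whose open 5-capacity satisfies CP_5(q) ⊆ ℝ/5ℤ ∖ σ(A), where σ(A) denotes the topological closure of A. -/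
open Finset


open Finset

/-! ### Auxiliary material -/

section CircleAux

lemma coe5_eq_iff (a b : ℝ) :
    ((a : AddCircle (5:ℝ)) = (b : AddCircle (5:ℝ))) ↔ ∃ k : ℤ, a = b + 5 * k := by
  rw [QuotientAddGroup.eq_iff_sub_mem]
  constructor
  · rintro ⟨k, hk⟩
    simp only [zsmul_eq_mul] at hk
    exact ⟨k, by push_cast at hk ⊢; linarith⟩
  · rintro ⟨k, hk⟩
    refine ⟨k, ?_⟩
    simp only [zsmul_eq_mul]
    push_cast
    linarith

noncomputable def cc (t : ℝ) : AddCircle (5:ℝ) := (t : AddCircle (5:ℝ))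

lemma cc_add (s t : ℝ) : cc (s + t) = cc s + cc t := rfl
lemma cc_neg (s : ℝ) : cc (-s) = -cc s := rfl
lemma cc5 : cc 5 = 0 := by
  have := (coe5_eq_iff 5 0).2 ⟨1, by norm_num⟩
  simpa [cc] using this

def Ic (a : ℝ) : Set (AddCircle (5:ℝ)) := cc '' Set.Icc a (a+1)
def Hset : Set (AddCircle (5:ℝ)) := cc '' Set.Ioo 1 4

lemma arc_unit (a : ℝ) : openArc 5 a (a+1) = cc '' Set.Ioo a (a+1) := by
  unfold openArc
  have h1 : (a - (a+1))/5 = (-1:ℝ)/5 := by ring_nf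
  have h2 : Int.fract ((-1:ℝ)/5) = 4/5 := by
    norm_num [Int.fract, Int.floor_eq_iff, show ((-1:ℤ):ℝ) ≤ (-1:ℝ)/5 by norm_num]
  rw [h1, h2]; norm_num [cc]; rfl

lemma arc_unit' (a b : ℝ) (hb : b = a + 1) : openArc 5 a b = cc '' Set.Ioo a (a+1) := by
  rw [hb]; exact arc_unit a

lemma arc14 : openArc 5 1 4 = Hset := by
  unfold openArc Hset
  have h1 : ((1:ℝ) - 4)/5 = (-3:ℝ)/5 := by ring_nf
  have h2 : Int.fract ((-3:ℝ)/5) = 2/5 := by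
    norm_num [Int.fract, Int.floor_eq_iff, show ((-1:ℤ):ℝ) ≤ (-3:ℝ)/5 by norm_num]
  rw [h1, h2]; norm_num [cc]; rfl

lemma closure_arc (a : ℝ) : closure (cc '' Set.Ioo a (a+1)) = Ic a := by
  have : Fact ((0:ℝ) < 5) := ⟨by norm_num⟩
  have hcont : Continuous cc := continuous_quotient_mk'
  apply le_antisymm
  · apply closure_minimal
    · exact Set.image_mono Set.Ioo_subset_Icc_self
    · exact (isCompact_Icc.image hcont).isClosed
  · have h1 : Set.Icc a (a+1) = closure (Set.Ioo a (a+1)) := (closure_Ioo (by norm_num)).symm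
    unfold Ic
    rw [h1]
    exact (image_closure_subset_closure_image hcont)

lemma step_out {a : ℝ} {x y : AddCircle (5:ℝ)} (hx : x ∈ Ic a)
    (hh : ∃ c ∈ Set.Ioo (1:ℝ) 4, y = x + cc c) : y ∉ Ic a := by
  rintro ⟨b, hb, hby⟩
  obtain ⟨s, hs, hsx⟩ := hx
  obtain ⟨c, hc, hyc⟩ := hh
  have hy : y = cc (s + c) := by rw [hyc, ← hsx, cc_add]
  have hbc : cc b = cc (s + c) := by rw [hby, hy]
  obtain ⟨k, hk⟩ := (coe5_eq_iff b (s + c)).1 hbc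
  obtain ⟨hs1, hs2⟩ := hs
  obtain ⟨hc1, hc2⟩ := hc
  obtain ⟨hb1, hb2⟩ := hb
  have hk0 : (k:ℝ) < 0 := by linarith
  have hk0' : k < 0 := by exact_mod_cast hk0
  have hk1' : (k:ℝ) ≤ -1 := by exact_mod_cast (by omega : k ≤ -1)
  linarith

lemma neg_mem_Ic {a : ℝ} {x : AddCircle (5:ℝ)} (hx : x ∈ Ic a) : -x ∈ Ic (-a-1) := by
  obtain ⟨s, hs, hsx⟩ := hx
  refine ⟨-s, ⟨by simp at hs ⊢; linarith [hs.2], by simp at hs ⊢; linarith [hs.1]⟩, ?_⟩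
  rw [← hsx, cc_neg]

lemma neg_mem_H {x : AddCircle (5:ℝ)} (hx : x ∈ Hset) : -x ∈ Hset := by
  obtain ⟨s, hs, hsx⟩ := hx
  refine ⟨5 - s, ⟨by linarith [hs.2], by linarith [hs.1]⟩, ?_⟩
  rw [← hsx]
  have h : ((5:ℝ) - s) = -s + 5 := by ring
  rw [h, cc_add, cc_neg, cc5, add_zero]

lemma step_flip {a b : ℝ} {x y : AddCircle (5:ℝ)}
    (hx : x ∈ Ic a ∪ Ic b) (hy : y ∈ Ic a ∪ Ic b)
    (hh : ∃ c ∈ Set.Ioo (1:ℝ) 4, y = x + cc c) : (y ∈ Ic a ↔ x ∉ Ic a) := by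
  constructor
  · intro hya hxa
    exact step_out hxa hh hya
  · intro hxa
    rcases hx with hxa' | hxb
    · exact absurd hxa' hxa
    · rcases hy with hya | hyb
      · exact hya
      · exact absurd hyb (step_out hxb hh)

lemma neg_mem_Io {a : ℝ} {x : AddCircle (5:ℝ)} (hx : x ∈ cc '' Set.Ioo a (a+1)) :
    -x ∈ cc '' Set.Ioo (-a-1) (-a-1+1) := by
  obtain ⟨s, hs, hsx⟩ := hx
  exact ⟨-s, ⟨by simp at hs ⊢; linarith [hs.2], by simp at hs ⊢; linarith [hs.1]⟩,
    by rw [← hsx, cc_neg]⟩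

lemma zero_not_Hset : (0 : AddCircle (5:ℝ)) ∉ Hset := by
  rintro ⟨c, hc, hc0⟩
  have h0 : cc c = cc 0 := by rw [hc0]; rfl
  obtain ⟨k, hk⟩ := (coe5_eq_iff c 0).1 h0
  obtain ⟨hc1, hc2⟩ := hc
  have hk0 : 0 < (k:ℝ) := by linarith
  have hk1 : (1:ℝ) ≤ (k:ℝ) := by exact_mod_cast (by exact_mod_cast hk0 : (0:ℤ) < k)
  linarith

lemma unit_smul_mem {S : Set (AddCircle (5:ℝ))} (hS : ∀ x ∈ S, -x ∈ S) (u : ℤˣ)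
    {x : AddCircle (5:ℝ)} (hx : x ∈ S) : ((u:ℤ) • x) ∈ S := by
  rcases Int.units_eq_one_or u with h | h <;> rw [h]
  · simpa using hx
  · simpa using hS x hx

lemma chain_contradiction {m : ℕ} (hodd : Odd m) (hm2 : 2 ≤ m)
    {a b : ℝ} (x : ℕ → AddCircle (5:ℝ))
    (hmem : ∀ j < m, x j ∈ Ic a ∪ Ic b)
    (hstep : ∀ j < m, ∃ c ∈ Set.Ioo (1:ℝ) 4,
      x (if j + 1 = m then 0 else j + 1) = x j + cc c) : False := by
  let idx : ℕ → ℕ := fun k => Nat.rec 0 (fun _ prev => if prev + 1 = m then 0 else prev + 1) k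
  have hidx0 : idx 0 = 0 := rfl
  have hidxs : ∀ k, idx (k + 1) = if idx k + 1 = m then 0 else idx k + 1 := fun k => rfl
  have hform : ∀ k, k ≤ m → idx k = if k < m then k else 0 := by
    intro k
    induction k with
    | zero => intro _; simp [hidx0]
    | succ k ih =>
      intro hk
      have hk' : k ≤ m := by omega
      have hkm : k < m := by omega
      rw [hidxs, ih hk']
      simp only [if_pos hkm]
      by_cases h : k + 1 = m
      · simp [h]
      · have h2 : k + 1 < m := by omega
        simp [h, h2]
  have hidxlt : ∀ k, k ≤ m → idx k < m := by
    intro k hk; rw [hform k hk]; split <;> omega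
  have parity : ∀ k, k ≤ m → (x (idx k) ∈ Ic a ↔ (Even k ↔ x 0 ∈ Ic a)) := by
    intro k
    induction k with
    | zero => intro _; rw [hidx0]; simp
    | succ k ih =>
      intro hk
      have hk' : k ≤ m := by omega
      obtain ⟨c, hc, hcx⟩ := hstep (idx k) (hidxlt k hk')
      have hflip : x (idx (k+1)) ∈ Ic a ↔ ¬ (x (idx k) ∈ Ic a) := by
        refine step_flip (hmem _ (hidxlt k hk')) (hmem _ (hidxlt (k+1) hk)) ⟨c, hc, ?_⟩
        rw [hidxs]; exact hcx
      rw [hflip, ih hk', Nat.even_add_one]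
      tauto
  have hfin := parity m le_rfl
  rw [hform m le_rfl, if_neg (lt_irrefl m)] at hfin
  have : ¬ Even m := Nat.not_even_iff_odd.2 hodd
  tauto

lemma solve3 {M : Type*} [AddCommGroup M] {A B C : M} (h : A + (B + C) = 0) : B = -A + -C := by
  have h2 : B + (A + C) = A + (B + C) := by abel
  rw [h] at h2
  rw [add_eq_zero_iff_eq_neg] at h2
  rw [h2, neg_add]

end CircleAux

section GraphAux

def Multigraph.ic (G : Multigraph) (v : G.V) (e : G.E) : ℕ :=
  (if G.src e = v then 1 else 0) + (if G.tgt e = v then 1 else 0)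

def Multigraph.sg (G : Multigraph) (v : G.V) (e : G.E) : ℤ :=
  (if G.src e = v then 1 else 0) - (if G.tgt e = v then 1 else 0)

lemma Multigraph.degree_eq_sum (G : Multigraph) (v : G.V) :
    G.degree v = ∑ e, G.ic v e := by
  unfold Multigraph.degree Multigraph.ic
  rw [Finset.card_filter, Finset.card_filter, ← Finset.sum_add_distrib]

lemma Multigraph.ic_zero {G : Multigraph} {v : G.V} {e : G.E} (h : G.ic v e = 0) :
    G.src e ≠ v ∧ G.tgt e ≠ v := by
  unfold Multigraph.ic at h; constructor <;> (intro hh; simp [hh] at h)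

lemma Multigraph.ic_one {G : Multigraph} {v : G.V} {e : G.E} (h : G.ic v e = 1) :
    (G.src e = v ∧ G.tgt e ≠ v) ∨ (G.src e ≠ v ∧ G.tgt e = v) := by
  unfold Multigraph.ic at h
  by_cases h1 : G.src e = v <;> by_cases h2 : G.tgt e = v <;> simp [h1, h2] at h ⊢

lemma sum_nat_eq_one {α : Type*} [DecidableEq α] {s : Finset α} {f : α → ℕ}
    (h : ∑ x ∈ s, f x = 1) :
    ∃ x ∈ s, f x = 1 ∧ ∀ y ∈ s, y ≠ x → f y = 0 := by
  obtain ⟨x, hxs, hx0⟩ := Finset.exists_ne_zero_of_sum_ne_zero (h ▸ one_ne_zero)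
  have hle : f x ≤ 1 := h ▸ Finset.single_le_sum (fun _ _ => Nat.zero_le _) hxs
  have hfx : f x = 1 := by omega
  refine ⟨x, hxs, hfx, fun y hys hyx => ?_⟩
  have hsum : f x + ∑ z ∈ s.erase x, f z = 1 := by rw [Finset.add_sum_erase _ _ hxs]; exact h
  have h0 : ∑ z ∈ s.erase x, f z = 0 := by omega
  exact (Finset.sum_eq_zero_iff.1 h0) y (Finset.mem_erase.2 ⟨hyx, hys⟩)

lemma Multigraph.third_of_two {G : Multigraph} {v : G.V} (hdeg : G.degree v = 3)
    {e₁ e₂ : G.E} (hne : e₁ ≠ e₂) (h₁ : G.ic v e₁ = 1) (h₂ : G.ic v e₂ = 1) :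
    ∃ e₃, e₃ ≠ e₁ ∧ e₃ ≠ e₂ ∧ G.ic v e₃ = 1 ∧
      ∀ e, e ≠ e₁ → e ≠ e₂ → e ≠ e₃ → G.ic v e = 0 := by
  have hsum : ∑ e : G.E, G.ic v e = 3 := by rw [← G.degree_eq_sum]; exact hdeg
  have hmem1 : e₁ ∈ (Finset.univ : Finset G.E) := Finset.mem_univ _
  have hmem2 : e₂ ∈ Finset.univ.erase e₁ := Finset.mem_erase.2 ⟨hne.symm, Finset.mem_univ _⟩
  have h3 : G.ic v e₁ + ∑ e ∈ Finset.univ.erase e₁, G.ic v e = 3 := by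
    rw [Finset.add_sum_erase _ _ hmem1]; exact hsum
  have h4 : G.ic v e₂ + ∑ e ∈ (Finset.univ.erase e₁).erase e₂, G.ic v e
      = ∑ e ∈ Finset.univ.erase e₁, G.ic v e := Finset.add_sum_erase _ _ hmem2
  have h5 : ∑ e ∈ (Finset.univ.erase e₁).erase e₂, G.ic v e = 1 := by omega
  obtain ⟨e₃, he₃s, he₃1, hrest⟩ := sum_nat_eq_one h5
  rw [Finset.mem_erase, Finset.mem_erase] at he₃s
  refine ⟨e₃, he₃s.2.1, he₃s.1, he₃1, fun e he1 he2 he3 => ?_⟩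
  exact hrest e (by simp [Finset.mem_erase, he1, he2]) he3

lemma Multigraph.third_of_loop {G : Multigraph} {v : G.V} (hdeg : G.degree v = 3)
    {e₁ : G.E} (h₁ : G.ic v e₁ = 2) :
    ∃ e₃, e₃ ≠ e₁ ∧ G.ic v e₃ = 1 ∧ ∀ e, e ≠ e₁ → e ≠ e₃ → G.ic v e = 0 := by
  have hsum : ∑ e : G.E, G.ic v e = 3 := by rw [← G.degree_eq_sum]; exact hdeg
  have h3 : G.ic v e₁ + ∑ e ∈ Finset.univ.erase e₁, G.ic v e = 3 := by
    rw [Finset.add_sum_erase _ _ (Finset.mem_univ e₁)]; exact hsum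
  have h5 : ∑ e ∈ Finset.univ.erase e₁, G.ic v e = 1 := by omega
  obtain ⟨e₃, he₃s, he₃1, hrest⟩ := sum_nat_eq_one h5
  rw [Finset.mem_erase] at he₃s
  refine ⟨e₃, he₃s.1, he₃1, fun e he1 he3 => ?_⟩
  exact hrest e (Finset.mem_erase.2 ⟨he1, Finset.mem_univ _⟩) he3

lemma Multigraph.flow_support {G : Multigraph} {g : G.E → AddCircle (5:ℝ)}
    (hg : G.IsFlow g) (v : G.V) (s : Finset G.E)
    (h0 : ∀ e ∉ s, G.src e ≠ v ∧ G.tgt e ≠ v) :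
    ∑ e ∈ s, G.sg v e • g e = 0 := by
  have hterm : ∀ e, G.sg v e • g e =
      (if G.src e = v then g e else 0) - (if G.tgt e = v then g e else 0) := by
    intro e
    unfold Multigraph.sg
    by_cases h1 : G.src e = v <;> by_cases h2 : G.tgt e = v <;> simp [h1, h2]
  calc ∑ e ∈ s, G.sg v e • g e
      = ∑ e ∈ s, ((if G.src e = v then g e else 0) - (if G.tgt e = v then g e else 0)) :=
        Finset.sum_congr rfl (fun e _ => hterm e)
    _ = (∑ e ∈ s, if G.src e = v then g e else 0)
        - (∑ e ∈ s, if G.tgt e = v then g e else 0) := by rw [Finset.sum_sub_distrib]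
    _ = (∑ e : G.E, if G.src e = v then g e else 0)
        - (∑ e : G.E, if G.tgt e = v then g e else 0) := by
        rw [Finset.sum_subset (Finset.subset_univ s) (fun e _ he => by simp [(h0 e he).1]),
            Finset.sum_subset (Finset.subset_univ s) (fun e _ he => by simp [(h0 e he).2])]
    _ = 0 := by
        rw [← Finset.sum_filter, ← Finset.sum_filter, hg v, sub_self]

def Multigraph.restoreEquiv (G : Multigraph) (e₀ : G.E) :
    Option {e : G.E // e ≠ e₀} ≃ G.E where
  toFun o := o.elim e₀ Subtype.val
  invFun e := if h : e = e₀ then none else some ⟨e, h⟩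
  left_inv o := by
    cases o with
    | none => simp
    | some x => simp [x.2]
  right_inv e := by
    by_cases h : e = e₀ <;> simp [h]

lemma Multigraph.transfer {M : Type*} [AddCommGroup M] (G : Multigraph) (e₀ : G.E)
    (σ : Option {e : G.E // e ≠ e₀} → ℤˣ) (f : Option {e : G.E // e ≠ e₀} → M)
    (hf : ((G.deleteEdge e₀).addEdge (G.src e₀) (G.tgt e₀)).IsFlowOn σ f) :
    G.IsFlow (fun e => if h : e = e₀ then ((σ none : ℤ) • f none)
      else ((σ (some ⟨e, h⟩) : ℤ) • f (some ⟨e, h⟩))) := by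
  intro v
  have hsrc : ∀ o : Option {e : G.E // e ≠ e₀},
      ((G.deleteEdge e₀).addEdge (G.src e₀) (G.tgt e₀)).src o = G.src (G.restoreEquiv e₀ o) := by
    rintro (_ | x) <;> rfl
  have htgt : ∀ o : Option {e : G.E // e ≠ e₀},
      ((G.deleteEdge e₀).addEdge (G.src e₀) (G.tgt e₀)).tgt o = G.tgt (G.restoreEquiv e₀ o) := by
    rintro (_ | x) <;> rfl
  have hval : ∀ o : Option {e : G.E // e ≠ e₀},
      (fun e => if h : e = e₀ then ((σ none : ℤ) • f none)
        else ((σ (some ⟨e, h⟩) : ℤ) • f (some ⟨e, h⟩))) (G.restoreEquiv e₀ o)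
      = (σ o : ℤ) • f o := by
    rintro (_ | x)
    · simp [Multigraph.restoreEquiv]
    · have hx : (x.val : G.E) ≠ e₀ := x.2
      simp [Multigraph.restoreEquiv, hx]
  have h1 : ∀ (w : G.V),
      (∑ e ∈ Finset.univ.filter (fun e => G.src e = w),
        (fun e => if h : e = e₀ then ((σ none : ℤ) • f none)
          else ((σ (some ⟨e, h⟩) : ℤ) • f (some ⟨e, h⟩))) e)
      = ∑ o ∈ @Finset.filter _
          (fun o => ((G.deleteEdge e₀).addEdge (G.src e₀) (G.tgt e₀)).src o = w)
          (fun o => G.decV _ w) Finset.univ,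
          (σ o : ℤ) • f o := by
    intro w
    rw [Finset.sum_filter, @Finset.sum_filter _ _ _ _
      (fun o => ((G.deleteEdge e₀).addEdge (G.src e₀) (G.tgt e₀)).src o = w)
      (fun o => G.decV _ w) (fun o => (σ o : ℤ) • f o)]
    refine (Fintype.sum_equiv (G.restoreEquiv e₀) _ _ ?_).symm
    intro o
    rw [hsrc o]
    congr 1
    exact (hval o).symm
  have h2 : ∀ (w : G.V),
      (∑ e ∈ Finset.univ.filter (fun e => G.tgt e = w),
        (fun e => if h : e = e₀ then ((σ none : ℤ) • f none)
          else ((σ (some ⟨e, h⟩) : ℤ) • f (some ⟨e, h⟩))) e)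
      = ∑ o ∈ @Finset.filter _
          (fun o => ((G.deleteEdge e₀).addEdge (G.src e₀) (G.tgt e₀)).tgt o = w)
          (fun o => G.decV _ w) Finset.univ,
          (σ o : ℤ) • f o := by
    intro w
    rw [Finset.sum_filter, @Finset.sum_filter _ _ _ _
      (fun o => ((G.deleteEdge e₀).addEdge (G.src e₀) (G.tgt e₀)).tgt o = w)
      (fun o => G.decV _ w) (fun o => (σ o : ℤ) • f o)]
    refine (Fintype.sum_equiv (G.restoreEquiv e₀) _ _ ?_).symm
    intro o
    rw [htgt o]
    congr 1
    exact (hval o).symm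
  rw [h1 v, h2 v]
  exact hf v

end GraphAux

/-- In the setting of the odd-cycle corollary (odd cycle of
degree-3 vertices, all its edges of the same capacity `A` of measure 2, third
edges of capacity contained in `(1,4)`), deleting an edge `uv` of the cycle
yields a capacitated g-edge whose open 5-capacity is contained in the
complement of the topological closure of `A`. -/
theorem odd_cycle_deleted_capacity (G : Multigraph) (cap : G.E → Set (AddCircle (5 : ℝ)))
    (m : ℕ) (hodd : Odd m) (p : ℕ → G.V) (pe : ℕ → G.E)
    (hclosed : p m = p 0)
    (hinjV : Set.InjOn p (Set.Iio m)) (hinjE : Set.InjOn pe (Set.Iio m))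
    (hinc : ∀ i < m, (G.src (pe i) = p i ∧ G.tgt (pe i) = p (i + 1)) ∨
      (G.src (pe i) = p (i + 1) ∧ G.tgt (pe i) = p i))
    (n : ℤ) (A : Set (AddCircle (5 : ℝ)))
    (hA : A = openArc 5 (n : ℝ) ((n : ℝ) + 1) ∪ openArc 5 (-(n : ℝ) - 1) (-(n : ℝ)))
    (htwo : openArc 5 (n : ℝ) ((n : ℝ) + 1) ≠ openArc 5 (-(n : ℝ) - 1) (-(n : ℝ)))
    (hcapA : ∀ i < m, cap (pe i) = A)
    (hdeg : ∀ i < m, G.degree (p i) = 3)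
    (hthird : ∀ i < m, ∀ e : G.E, (∀ j < m, e ≠ pe j) →
      (G.src e = p i ∨ G.tgt e = p i) → cap e ⊆ openArc 5 1 4) :
    ∀ i < m,
      CPcap 5 (G.deleteEdge (pe i)) (fun e => cap e.1)
          (G.src (pe i)) (G.tgt (pe i)) ⊆ (closure A)ᶜ := by
  intro i him t ht
  simp only [Set.mem_compl_iff]
  intro hclmem
  obtain ⟨σ, f, hflow, hcapf, hnone⟩ := ht
  -- the induced flow on `G` in the reference orientation
  set g : G.E → AddCircle (5:ℝ) := fun e =>
    if h : e = pe i then ((σ none : ℤ) • f none)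
    else ((σ (some ⟨e, h⟩) : ℤ) • f (some ⟨e, h⟩)) with hgdef
  have hg : G.IsFlow g := G.transfer (pe i) σ f hflow
  -- the two arcs
  have hA' : A = cc '' Set.Ioo (n:ℝ) ((n:ℝ)+1)
      ∪ cc '' Set.Ioo (-(n:ℝ)-1) ((-(n:ℝ)-1)+1) := by
    rw [hA, arc_unit' (n:ℝ) ((n:ℝ)+1) rfl, arc_unit' (-(n:ℝ)-1) (-(n:ℝ)) (by ring)]
  have hclA : closure A = Ic (n:ℝ) ∪ Ic (-(n:ℝ)-1) := by
    rw [hA', closure_union, closure_arc, closure_arc]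
  have hUsym : ∀ x ∈ Ic (n:ℝ) ∪ Ic (-(n:ℝ)-1), -x ∈ Ic (n:ℝ) ∪ Ic (-(n:ℝ)-1) := by
    intro x hx
    rcases hx with hx | hx
    · exact Or.inr (neg_mem_Ic hx)
    · left
      have h2 := neg_mem_Ic hx
      have h3 : -(-(n:ℝ)-1)-1 = (n:ℝ) := by ring
      rwa [h3] at h2
  have hHsym : ∀ x ∈ Hset, -x ∈ Hset := fun x hx => neg_mem_H hx
  -- the cycle-edge values of g lie in the closure of A
  have hgmem : ∀ j, j < m → g (pe j) ∈ Ic (n:ℝ) ∪ Ic (-(n:ℝ)-1) := by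
    intro j hj
    by_cases hji : j = i
    · subst hji
      have hval : g (pe j) = (σ none : ℤ) • t := by
        rw [hgdef]; simp only [dif_pos]; rw [hnone]
      rw [hval]
      have htm : t ∈ Ic (n:ℝ) ∪ Ic (-(n:ℝ)-1) := by rw [← hclA]; exact hclmem
      exact unit_smul_mem hUsym _ htm
    · have hne : pe j ≠ pe i := fun h => hji (hinjE (Set.mem_Iio.2 hj) (Set.mem_Iio.2 him) h)
      have hval : g (pe j) = (σ (some ⟨pe j, hne⟩) : ℤ) • f (some ⟨pe j, hne⟩) := by
        rw [hgdef]; simp only [dif_neg hne]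
      rw [hval]
      refine unit_smul_mem hUsym _ ?_
      have hf1 : f (some ⟨pe j, hne⟩) ∈ cap (pe j) := hcapf ⟨pe j, hne⟩
      rw [hcapA j hj, hA'] at hf1
      rcases hf1 with h | h
      · exact Or.inl (Set.image_mono Set.Ioo_subset_Icc_self h)
      · exact Or.inr (Set.image_mono Set.Ioo_subset_Icc_self h)
  -- third edges take values in (1,4)
  have hgH : ∀ e : G.E, (∀ k, k < m → e ≠ pe k) → cap e ⊆ openArc 5 1 4 → g e ∈ Hset := by
    intro e hek hsub
    have hne : e ≠ pe i := hek i him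
    have hval : g e = (σ (some ⟨e, hne⟩) : ℤ) • f (some ⟨e, hne⟩) := by
      rw [hgdef]; simp only [dif_neg hne]
    rw [hval]
    refine unit_smul_mem hHsym _ ?_
    have hf1 := hsub (hcapf ⟨e, hne⟩)
    rwa [arc14] at hf1
  by_cases hm1 : m = 1
  · -- the odd cycle is a loop: the third edge carries a zero value, contradiction
    subst hm1
    have hi0 : i = 0 := by omega
    subst hi0
    have hp10 : p 1 = p 0 := hclosed
    have hloop : G.src (pe 0) = p 0 ∧ G.tgt (pe 0) = p 0 := by
      rcases hinc 0 (by omega) with ⟨h1, h2⟩ | ⟨h1, h2⟩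
      · exact ⟨h1, by rw [h2]; exact hp10⟩
      · exact ⟨by rw [h1]; exact hp10, h2⟩
    have hic2 : G.ic (p 0) (pe 0) = 2 := by simp [Multigraph.ic, hloop.1, hloop.2]
    obtain ⟨e₃, he31, he3ic, hrest⟩ := Multigraph.third_of_loop (hdeg 0 (by omega)) hic2
    have hsum := Multigraph.flow_support hg (p 0) {pe 0, e₃} (by
      intro e he
      simp only [Finset.mem_insert, Finset.mem_singleton, not_or] at he
      exact Multigraph.ic_zero (hrest e he.1 he.2))
    rw [Finset.sum_insert (by simp [Finset.mem_singleton]; exact fun h => he31 h.symm),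
      Finset.sum_singleton] at hsum
    have hsg0 : G.sg (p 0) (pe 0) = 0 := by simp [Multigraph.sg, hloop.1, hloop.2]
    rw [hsg0, zero_zsmul, zero_add] at hsum
    have hg3 : g e₃ ∈ Hset := by
      refine hgH e₃ (fun k hk => by
        have hk0 : k = 0 := by omega
        subst hk0; exact he31) ?_
      refine hthird 0 (by omega) e₃ (fun j hj => by
        have hj0 : j = 0 := by omega
        subst hj0; exact he31) ?_
      rcases Multigraph.ic_one he3ic with ⟨h1, _⟩ | ⟨_, h2⟩
      · exact Or.inl h1
      · exact Or.inr h2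
    have hgz : g e₃ = 0 := by
      rcases Multigraph.ic_one he3ic with ⟨h1, h2⟩ | ⟨h1, h2⟩
      · have hs1 : G.sg (p 0) e₃ = 1 := by simp [Multigraph.sg, h1, h2]
        rw [hs1] at hsum; simpa using hsum
      · have hs1 : G.sg (p 0) e₃ = -1 := by simp [Multigraph.sg, h1, h2]
        rw [hs1] at hsum
        simpa [neg_eq_zero] using hsum
    exact zero_not_Hset (hgz ▸ hg3)
  · -- genuine odd cycle
    have hm2 : 2 ≤ m := by
      have := hodd.pos
      omega
    have hpnx : ∀ j, j < m → p (if j + 1 = m then 0 else j + 1) = p (j+1) := by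
      intro j hj
      by_cases h : j + 1 = m
      · simp only [if_pos h]
        rw [h]
        exact hclosed.symm
      · simp [h]
    have hnxlt : ∀ j, j < m → (if j + 1 = m then 0 else j + 1) < m := by
      intro j hj; split <;> omega
    have hploop : ∀ j, j < m → p j ≠ p (j + 1) := by
      intro j hj heq
      have hj'm : (if j + 1 = m then 0 else j + 1) < m := hnxlt j hj
      have hjeq : j = (if j + 1 = m then 0 else j + 1) :=
        hinjV (Set.mem_Iio.2 hj) (Set.mem_Iio.2 hj'm) (heq.trans (hpnx j hj).symm)
      revert hjeq
      split <;> omega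
    -- the step relation
    have hstep : ∀ j, j < m → ∃ c ∈ Set.Ioo (1:ℝ) 4,
        (if G.src (pe (if j + 1 = m then 0 else j + 1)) = p (if j + 1 = m then 0 else j + 1)
          then (1:ℤ) else -1) • g (pe (if j + 1 = m then 0 else j + 1))
        = (if G.src (pe j) = p j then (1:ℤ) else -1) • g (pe j) + cc c := by
      intro j hj
      set j' := if j + 1 = m then 0 else j + 1 with hj'def
      have hj'm : j' < m := hnxlt j hj
      have hjj' : j ≠ j' := by rw [hj'def]; split <;> omega
      have hpj' : p j' = p (j+1) := hpnx j hj
      have hnlj : p j ≠ p (j+1) := hploop j hj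
      have hnlj' : p j' ≠ p (j'+1) := hploop j' hj'm
      have hpjj' : p j ≠ p j' := fun h => hnlj (h.trans hpj')
      have hpj'j : p j' ≠ p j := fun h => hpjj' h.symm
      have hee : pe j ≠ pe j' := fun h => hjj' (hinjE (Set.mem_Iio.2 hj) (Set.mem_Iio.2 hj'm) h)
      -- incidence counts at the vertex p j'
      have hic1 : G.ic (p j') (pe j) = 1 := by
        rcases hinc j hj with ⟨h1, h2⟩ | ⟨h1, h2⟩
        · have hx1 : G.src (pe j) ≠ p j' := by
            rw [h1]; intro h; exact hnlj (h.trans hpj')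
          have hx2 : G.tgt (pe j) = p j' := by rw [h2, hpj']
          simp [Multigraph.ic, hx1, hx2]
        · have hx1 : G.src (pe j) = p j' := by rw [h1, hpj']
          have hx2 : G.tgt (pe j) ≠ p j' := by
            rw [h2]; intro h; exact hnlj (h.trans hpj')
          simp [Multigraph.ic, hx1, hx2]
      have hic2 : G.ic (p j') (pe j') = 1 := by
        rcases hinc j' hj'm with ⟨h1, h2⟩ | ⟨h1, h2⟩
        · have hx1 : G.src (pe j') = p j' := h1
          have hx2 : G.tgt (pe j') ≠ p j' := by
            rw [h2]; intro h; exact hnlj' h.symm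
          simp [Multigraph.ic, hx1, hx2]
        · have hx1 : G.src (pe j') ≠ p j' := by
            rw [h1]; intro h; exact hnlj' h.symm
          have hx2 : G.tgt (pe j') = p j' := h2
          simp [Multigraph.ic, hx1, hx2]
      obtain ⟨e₃, h31, h32, h3ic, hrest⟩ :=
        Multigraph.third_of_two (hdeg j' hj'm) hee hic1 hic2
      -- e₃ is not a cycle edge
      have h3cyc : ∀ k, k < m → e₃ ≠ pe k := by
        intro k hk hek
        have hkj : k ≠ j := fun h => h31 (by rw [hek, h])
        have hkj' : k ≠ j' := fun h => h32 (by rw [hek, h])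
        have hinc3 : G.src e₃ = p j' ∨ G.tgt e₃ = p j' := by
          rcases Multigraph.ic_one h3ic with ⟨h1, _⟩ | ⟨_, h2⟩
          · exact Or.inl h1
          · exact Or.inr h2
        have hends : p k = p j' ∨ p (k+1) = p j' := by
          rcases hinc k hk with ⟨h1, h2⟩ | ⟨h1, h2⟩ <;> rcases hinc3 with h3 | h3
          · exact Or.inl (by rw [← h1, ← hek, h3])
          · exact Or.inr (by rw [← h2, ← hek, h3])
          · exact Or.inr (by rw [← h1, ← hek, h3])
          · exact Or.inl (by rw [← h2, ← hek, h3])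
        rcases hends with h | h
        · exact hkj' (hinjV (Set.mem_Iio.2 hk) (Set.mem_Iio.2 hj'm) h)
        · have hk1 : p (if k + 1 = m then 0 else k + 1) = p j' := (hpnx k hk).trans h
          have := hinjV (Set.mem_Iio.2 (hnxlt k hk)) (Set.mem_Iio.2 hj'm) hk1
          rw [hj'def] at this
          revert this
          split <;> split <;> omega
      -- its value lies in (1,4)
      have hg3 : g e₃ ∈ Hset := by
        refine hgH e₃ h3cyc ?_
        refine hthird j' hj'm e₃ (fun k hk => h3cyc k hk) ?_
        rcases Multigraph.ic_one h3ic with ⟨h1, _⟩ | ⟨_, h2⟩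
        · exact Or.inl h1
        · exact Or.inr h2
      -- the flow equation at p j'
      have hsum := Multigraph.flow_support hg (p j') {pe j, pe j', e₃} (by
        intro e he
        simp only [Finset.mem_insert, Finset.mem_singleton, not_or] at he
        exact Multigraph.ic_zero (hrest e he.1 he.2.1 he.2.2))
      rw [Finset.sum_insert (by
            simp only [Finset.mem_insert, Finset.mem_singleton]
            push_neg
            exact ⟨hee, fun h => h31 h.symm⟩),
          Finset.sum_insert (by
            simp only [Finset.mem_singleton]
            exact fun h => h32 h.symm),
          Finset.sum_singleton] at hsum
      -- the signs
      have hse1 : G.sg (p j') (pe j) = -(if G.src (pe j) = p j then (1:ℤ) else -1) := by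
        rcases hinc j hj with ⟨h1, h2⟩ | ⟨h1, h2⟩
        · have hx1 : G.src (pe j) ≠ p j' := by
            rw [h1]; intro h; exact hnlj (h.trans hpj')
          have hx2 : G.tgt (pe j) = p j' := by rw [h2, hpj']
          simp [Multigraph.sg, hx1, hx2, h1, hpjj', hpj'j]
        · have hx1 : G.src (pe j) = p j' := by rw [h1, hpj']
          have hx2 : G.tgt (pe j) ≠ p j' := by
            rw [h2]; intro h; exact hnlj (h.trans hpj')
          have hx3 : G.src (pe j) ≠ p j := by
            rw [h1]; intro h; exact hnlj h.symm
          simp [Multigraph.sg, hx1, hx2, hx3, hpjj', hpj'j]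
      have hse2 : G.sg (p j') (pe j') = (if G.src (pe j') = p j' then (1:ℤ) else -1) := by
        rcases hinc j' hj'm with ⟨h1, h2⟩ | ⟨h1, h2⟩
        · have hx2 : G.tgt (pe j') ≠ p j' := by
            rw [h2]; intro h; exact hnlj' h.symm
          simp [Multigraph.sg, h1, hx2]
        · have hx1 : G.src (pe j') ≠ p j' := by
            rw [h1]; intro h; exact hnlj' h.symm
          simp [Multigraph.sg, hx1, h2]
      rw [hse1, hse2] at hsum
      -- rearrange
      have hkey := solve3 hsum
      rw [neg_zsmul, neg_neg] at hkey
      -- identify the third term as an element of (1,4)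
      have hmemH : -(G.sg (p j') e₃ • g e₃) ∈ Hset := by
        rcases Multigraph.ic_one h3ic with ⟨h1, h2⟩ | ⟨h1, h2⟩
        · have hs1 : G.sg (p j') e₃ = 1 := by simp [Multigraph.sg, h1, h2]
          rw [hs1, one_zsmul]
          exact hHsym _ hg3
        · have hs1 : G.sg (p j') e₃ = -1 := by simp [Multigraph.sg, h1, h2]
          rw [hs1, neg_one_zsmul, neg_neg]
          exact hg3
      obtain ⟨c, hc, hcc⟩ := hmemH
      exact ⟨c, hc, by rw [hkey, hcc]⟩
    -- assemble the chain and reach the parity contradiction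
    exact chain_contradiction hodd hm2
      (fun j => (if G.src (pe j) = p j then (1:ℤ) else -1) • g (pe j))
      (by
        intro j hj
        by_cases h : G.src (pe j) = p j
        · simp only [if_pos h, one_zsmul]
          exact hgmem j hj
        · simp only [if_neg h, neg_one_zsmul]
          exact hUsym _ (hgmem j hj))
      hstep
end
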